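/- Let α > −1/2, set ϑ_α = (4π)^{α+1} Γ(α+2), and let s > 0 be a zero of j_{α+1}. Then for every x ≥ 0 with x ≠ s: ϑ_α ∫_0^{1/(2π)} j_α(2πsy) j_α(2πxy) dμ_α(y) = j_α(s) · x² j_{α+1}(x) / (x² − s²). In other words, the Fourier–Bessel transform of ϑ_α j_α(2πs·)χ_{[0,1/(2π)]} is the function x ↦ j_α(s) x² j_{α+1}(x)/(x² − s²). -/

import Mathlib

open MeasureTheory Real Set

/-- The measure `dμ_α(x) = (2π^{α+1}/Γ(α+1)) x^{2α+1} dx` on `ℝ⁺ = [0,∞)`. -/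
noncomputable def muB (α : ℝ) : Measure ℝ :=
  (volume.restrict (Set.Ici (0:ℝ))).withDensity
    (fun x => ENNReal.ofReal (2 * π ^ (α+1) / Gamma (α+1) * x ^ (2*α+1)))

/-- The normalized Bessel function `j_α`. -/
noncomputable def besselJ (α : ℝ) (x : ℝ) : ℝ :=
  Gamma (α+1) * ∑' n : ℕ,
    ((-1:ℝ)^n / ((n.factorial : ℝ) * Gamma ((n:ℝ) + α + 1))) * (x/2)^(2*n)

/-- coefficient of the Bessel series -/
noncomputable def bc (α : ℝ) (n : ℕ) : ℝ :=
  (-1:ℝ)^n / ((n.factorial : ℝ) * Real.Gamma ((n:ℝ) + α + 1))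

lemma besselJ_def (α x : ℝ) : (Real.Gamma (α+1) * ∑' n : ℕ,
    ((-1:ℝ)^n / ((n.factorial : ℝ) * Real.Gamma ((n:ℝ) + α + 1))) * (x/2)^(2*n))
    = Real.Gamma (α+1) * ∑' n : ℕ, bc α n * (x/2)^(2*n) := rfl

lemma gammaPos {α : ℝ} (hα : -1 < α) (n : ℕ) : 0 < Real.Gamma ((n:ℝ) + α + 1) := by
  apply Real.Gamma_pos_of_pos
  have : (0:ℝ) ≤ n := Nat.cast_nonneg n
  linarith

lemma bc_abs {α : ℝ} (hα : -1 < α) (n : ℕ) :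
    |bc α n| = 1 / ((n.factorial : ℝ) * Real.Gamma ((n:ℝ) + α + 1)) := by
  rw [bc, abs_div, abs_pow, abs_neg, abs_one, one_pow]
  congr 1
  exact abs_of_pos (by have := gammaPos hα n; have := n.factorial_pos; positivity)

lemma bc_succ {α : ℝ} (hα : -1 < α) (n : ℕ) :
    bc α (n+1) * ((n:ℝ)+1) = - bc (α+1) n := by
  have h1 : ((n:ℝ) + 1 + α + 1) = ((n:ℝ) + α + 1) + 1 := by ring
  have h2 : ((n:ℝ) + (α+1) + 1) = ((n:ℝ) + α + 1) + 1 := by ring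
  have hne : ((n:ℝ) + α + 1) ≠ 0 := ne_of_gt (by have : (0:ℝ) ≤ n := Nat.cast_nonneg n; linarith)
  have hg : Real.Gamma ((n:ℝ) + α + 1 + 1) = ((n:ℝ)+α+1) * Real.Gamma ((n:ℝ)+α+1) :=
    Real.Gamma_add_one hne
  rw [bc, bc]
  push_cast
  rw [h1, h2, hg, Nat.factorial_succ]
  push_cast
  have hfac : ((n.factorial : ℝ)) ≠ 0 := Nat.cast_ne_zero.mpr n.factorial_ne_zero
  have hΓ := (gammaPos hα n).ne'
  field_simp
  ring

lemma summable_core {α : ℝ} (hα : -1 < α) {r : ℝ} (hr : 0 ≤ r) :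
    Summable (fun n : ℕ => ((n:ℝ)+1) * |bc α n| * r^n) := by
  apply summable_of_ratio_norm_eventually_le (r := 1/2) (by norm_num)
  rw [Filter.eventually_atTop]
  refine ⟨Nat.ceil (4*r) + 1, fun n hn => ?_⟩
  have hn1 : (1:ℝ) ≤ n := by
    have : 1 ≤ n := le_trans (Nat.le_add_left 1 _) hn
    exact_mod_cast this
  have h4r : 4*r ≤ (n:ℝ) := le_trans (Nat.le_ceil _) (by exact_mod_cast le_trans (Nat.le_succ _) hn)
  have hΓ := gammaPos hα n
  have hΓ' := gammaPos hα (n+1)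
  have hfac : (0:ℝ) < n.factorial := by exact_mod_cast n.factorial_pos
  have hnα : (0:ℝ) < (n:ℝ) + α + 1 := by linarith
  -- |bc α (n+1)| = |bc α n| / ((n+1)(n+α+1))
  have key : |bc α (n+1)| = |bc α n| / (((n:ℝ)+1) * ((n:ℝ)+α+1)) := by
    rw [bc_abs hα, bc_abs hα]
    have h1 : ((n:ℝ) + 1 + α + 1) = ((n:ℝ) + α + 1) + 1 := by ring
    push_cast
    rw [h1, Real.Gamma_add_one hnα.ne', Nat.factorial_succ]
    push_cast
    field_simp
  have hb := abs_nonneg (bc α n)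
  rw [norm_of_nonneg (by positivity), norm_of_nonneg (by positivity), key]
  push_cast
  rw [div_eq_mul_inv]
  have hrn : (0:ℝ) ≤ r^n := by positivity
  -- goal: (n+2) * (|bc| * ((n+1)(n+α+1))⁻¹) * r^(n+1) ≤ 1/2 * ((n+1)*|bc|*r^n)
  have step : ((n:ℝ)+1+1) * (|bc α n| * (((n:ℝ)+1) * ((n:ℝ)+α+1))⁻¹) * r^(n+1) ≤
      1/2 * (((n:ℝ)+1) * |bc α n| * r^n) := by
    rw [pow_succ]
    have hprod : (0:ℝ) < ((n:ℝ)+1) * ((n:ℝ)+α+1) := by positivity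
    rw [div_eq_mul_inv] at *
    -- rearrange: LHS = (n+2) * r / ((n+1)(n+α+1)) * (|bc| * r^n)
    have expand : ((n:ℝ)+1+1) * (|bc α n| * (((n:ℝ)+1) * ((n:ℝ)+α+1))⁻¹) * (r^n * r)
        = (((n:ℝ)+1+1) * r * (((n:ℝ)+1) * ((n:ℝ)+α+1))⁻¹) * (|bc α n| * r^n) := by ring
    rw [expand]
    have hcoef : ((n:ℝ)+1+1) * r * (((n:ℝ)+1) * ((n:ℝ)+α+1))⁻¹ ≤ 1/2 * ((n:ℝ)+1) := by
      rw [mul_inv_le_iff₀ hprod]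
      have h1 : ((n:ℝ)+1+1) ≤ 2*((n:ℝ)+1) := by linarith
      have h2 : (1:ℝ) ≤ (n:ℝ)+α+1 := by linarith
      nlinarith
    calc ((n:ℝ)+1+1) * r * (((n:ℝ)+1) * ((n:ℝ)+α+1))⁻¹ * (|bc α n| * r^n)
        ≤ 1/2 * ((n:ℝ)+1) * (|bc α n| * r^n) := by
          apply mul_le_mul_of_nonneg_right hcoef (by positivity)
      _ = 1/2 * (((n:ℝ)+1) * |bc α n| * r^n) := by ring
  exact step

lemma summable_bc_terms {α : ℝ} (hα : -1 < α) (z : ℝ) :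
    Summable (fun n : ℕ => bc α n * (z/2)^(2*n)) := by
  apply Summable.of_abs
  apply Summable.of_nonneg_of_le (fun n => abs_nonneg _) (fun n => ?_)
    (summable_core hα (r := (z/2)^2) (by positivity))
  rw [abs_mul, pow_mul, abs_pow, abs_of_nonneg (sq_nonneg (z/2))]
  nlinarith [mul_nonneg (mul_nonneg (Nat.cast_nonneg (α:=ℝ) n) (abs_nonneg (bc α n)))
    (pow_nonneg (sq_nonneg (z/2)) n)]

/-- derivative terms -/
noncomputable def bcd (α : ℝ) (n : ℕ) (y : ℝ) : ℝ := bc α n * n * (y/2)^(2*n-1)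

lemma hasDerivAt_term (α : ℝ) (n : ℕ) (y : ℝ) :
    HasDerivAt (fun y : ℝ => bc α n * (y/2)^(2*n)) (bcd α n y) y := by
  rcases Nat.eq_zero_or_pos n with h | h
  · subst h
    simp only [bcd, Nat.cast_zero, mul_zero, zero_mul, Nat.mul_zero, pow_zero, mul_one]
    exact hasDerivAt_const y _
  · have hd : HasDerivAt (fun y : ℝ => (y/2)^(2*n))
        ((2*n : ℕ) * (y/2)^(2*n-1) * (1/2)) y := by
      have h1 : HasDerivAt (fun y : ℝ => y/2) (1/2) y := (hasDerivAt_id y).div_const 2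
      exact h1.pow (2*n)
    have := hd.const_mul (bc α n)
    refine HasDerivAt.congr_deriv this ?_
    rw [bcd]
    push_cast
    ring

lemma bcd_bound {α : ℝ} (n : ℕ) {R y : ℝ} (hR : 0 < R) (hy : |y| ≤ R) :
    ‖bcd α n y‖ ≤ |bc α n| * n * (R/2)^(2*n-1) := by
  rw [bcd, Real.norm_eq_abs, abs_mul, abs_mul, abs_pow, Nat.abs_cast]
  have hy2 : |y/2| ≤ R/2 := by
    rw [abs_div, abs_two]; linarith
  exact mul_le_mul_of_nonneg_left (pow_le_pow_left₀ (abs_nonneg _) hy2 _)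
    (by positivity)

lemma summable_bcd_bound {α : ℝ} (hα : -1 < α) {R : ℝ} (hR : 0 < R) :
    Summable (fun n : ℕ => |bc α n| * n * (R/2)^(2*n-1)) := by
  apply Summable.of_nonneg_of_le (fun n => by positivity) (fun n => ?_)
    (((summable_core hα (r := (R/2)^2) (by positivity)).mul_right (2/R)))
  rcases Nat.eq_zero_or_pos n with h | h
  · subst h; simp; positivity
  · have h1 : 2*n-1 + 1 = 2*n := by omega
    have hRn : (0:ℝ) < R/2 := by linarith
    have h2 : (R/2)^(2*n-1) = ((R/2)^2)^n * (2/R) := by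
      have : ((R/2)^2)^n = (R/2)^(2*n) := by rw [← pow_mul, mul_comm]
      rw [this, ← h1, pow_succ, Nat.add_sub_cancel]
      field_simp
    rw [h2]
    have : |bc α n| * (n:ℝ) * (((R/2)^2)^n * (2/R)) =
        ((n:ℝ) * |bc α n| * ((R/2)^2)^n) * (2/R) := by ring
    rw [this]
    gcongr
    nlinarith [abs_nonneg (bc α n), pow_nonneg (sq_nonneg (R/2)) n, Nat.cast_nonneg (α := ℝ) n]

lemma besselJ_eq (α x : ℝ) : besselJ α x = Gamma (α+1) * ∑' n : ℕ, bc α n * (x/2)^(2*n) := rfl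

lemma hasDerivAt_besselJ {α : ℝ} (hα : -1 < α) (x : ℝ) :
    HasDerivAt (besselJ α) (-(x/(2*(α+1))) * besselJ (α+1) x) x := by
  set R : ℝ := |x| + 1 with hR
  have hR0 : 0 < R := by positivity
  have hxR : x ∈ Metric.ball (0:ℝ) R := by
    simp [Real.dist_eq, hR]
  have hderiv : HasDerivAt (fun z => ∑' n : ℕ, bc α n * (z/2)^(2*n))
      (∑' n : ℕ, bcd α n x) x := by
    apply hasDerivAt_tsum_of_isPreconnected (summable_bcd_bound hα hR0)
      Metric.isOpen_ball (convex_ball (0:ℝ) R).isPreconnected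
      (fun n y _ => hasDerivAt_term α n y)
      (fun n y hy => ?_) hxR (summable_bc_terms hα x) hxR
    · apply bcd_bound n hR0
      have := mem_ball_zero_iff.mp hy
      exact le_of_lt this
  have hmain : HasDerivAt (besselJ α) (Gamma (α+1) * ∑' n : ℕ, bcd α n x) x := by
    have := hderiv.const_mul (Gamma (α+1))
    exact this
  convert hmain using 1
  -- now the tsum identity
  have hsum : Summable (fun n : ℕ => bcd α n x) := by
    apply Summable.of_norm
    apply Summable.of_nonneg_of_le (fun n => norm_nonneg _)
      (fun n => bcd_bound n hR0 (by simp [hR])) (summable_bcd_bound hα hR0)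
  rw [hsum.tsum_eq_zero_add]
  have h0 : bcd α 0 x = 0 := by simp [bcd]
  rw [h0, zero_add]
  have hterm : ∀ n : ℕ, bcd α (n+1) x = -(x/2) * (bc (α+1) n * (x/2)^(2*n)) := by
    intro n
    have h1 : 2*(n+1) - 1 = 2*n + 1 := by omega
    rw [bcd, h1, pow_succ]
    have := bc_succ hα n
    push_cast
    linear_combination ((x/2)^(2*n) * (x/2)) * this
  rw [tsum_congr hterm, tsum_mul_left]
  rw [besselJ_eq]
  have hΓ : Gamma (α+1+1) = (α+1) * Gamma (α+1) := Real.Gamma_add_one (by linarith)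
  rw [hΓ]
  have hα1 : (α+1) ≠ 0 := by linarith
  field_simp

lemma gamma_shift {α : ℝ} (hα : -1 < α) (m : ℕ) :
    Real.Gamma ((m:ℝ) + α + 2) = ((m:ℝ)+α+1) * Real.Gamma ((m:ℝ)+α+1) := by
  rw [show (m:ℝ)+α+2 = ((m:ℝ)+α+1)+1 by ring]
  exact Real.Gamma_add_one (ne_of_gt (by have : (0:ℝ) ≤ m := Nat.cast_nonneg m; linarith))

lemma bessel_rec {α : ℝ} (hα : -1 < α) (z : ℝ) :
    besselJ α z - besselJ (α+1) z = -(z^2/(4*(α+1)*(α+2))) * besselJ (α+2) z := by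
  have hα1 : (α:ℝ) + 1 ≠ 0 := by linarith
  have hα2 : (α:ℝ) + 2 ≠ 0 := by linarith
  rw [besselJ_eq, besselJ_eq, besselJ_eq, ← tsum_mul_left, ← tsum_mul_left, ← tsum_mul_left,
    ← tsum_mul_left]
  rw [← Summable.tsum_sub ((summable_bc_terms hα z).mul_left _)
    ((summable_bc_terms (by linarith : (-1:ℝ) < α+1) z).mul_left _)]
  set T : ℕ → ℝ := fun n => Gamma (α+1) * (bc α n * (z/2)^(2*n)) -
      Gamma (α+1+1) * (bc (α+1) n * (z/2)^(2*n)) with hT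
  have hsumT : Summable T := ((summable_bc_terms hα z).mul_left _).sub
    ((summable_bc_terms (by linarith : (-1:ℝ) < α+1) z).mul_left _)
  rw [show (∑' n, (Gamma (α+1) * (bc α n * (z/2)^(2*n)) -
      Gamma (α+1+1) * (bc (α+1) n * (z/2)^(2*n)))) = ∑' n, T n from rfl]
  rw [hsumT.tsum_eq_zero_add]
  have hT0 : T 0 = 0 := by
    have h1 : Gamma ((0:ℕ):ℝ) = Gamma 0 := by norm_num
    simp only [hT, pow_zero, mul_one, Nat.factorial_zero, bc]
    norm_num
    have g1 : Gamma (α+1) ≠ 0 := ne_of_gt (Real.Gamma_pos_of_pos (by linarith))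
    have g2 : Gamma (α+1+1) ≠ 0 := ne_of_gt (Real.Gamma_pos_of_pos (by linarith))
    rw [mul_inv_cancel₀ g1, mul_inv_cancel₀ g2]
    norm_num
  rw [hT0, zero_add]
  have hterm : ∀ m : ℕ, T (m+1) =
      -(z^2/(4*(α+1)*(α+2))) * (Gamma (α+2+1) * (bc (α+2) m * (z/2)^(2*m))) := by
    intro m
    have hm : (0:ℝ) ≤ m := Nat.cast_nonneg m
    have hA : Real.Gamma ((m:ℝ)+α+1) ≠ 0 := ne_of_gt (gammaPos hα m)
    have g2 : Gamma ((m:ℝ)+α+2) = ((m:ℝ)+α+1) * Gamma ((m:ℝ)+α+1) := gamma_shift hα m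
    have g3 : Gamma ((m:ℝ)+α+3) = ((m:ℝ)+α+2) * Gamma ((m:ℝ)+α+2) := by
      have := gamma_shift (by linarith : (-1:ℝ) < α+1) m
      rw [show (m:ℝ)+(α+1)+2 = (m:ℝ)+α+3 by ring, show (m:ℝ)+(α+1)+1 = (m:ℝ)+α+2 by ring] at this
      exact this
    have gΓ1 : Gamma (α+1+1) = (α+1) * Gamma (α+1) := Real.Gamma_add_one hα1
    have gΓ2 : Gamma (α+2+1) = (α+2) * Gamma (α+2) := Real.Gamma_add_one hα2
    have gΓ2' : Gamma (α+2) = (α+1) * Gamma (α+1) := by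
      rw [show α+2 = (α+1)+1 by ring]; exact Real.Gamma_add_one hα1
    simp only [hT, bc]
    rw [show ((m:ℕ)+1 : ℕ) = m+1 from rfl]
    push_cast
    rw [show ((m:ℝ)+1+α+1) = (m:ℝ)+α+2 by ring, show ((m:ℝ)+1+(α+1)+1) = (m:ℝ)+α+3 by ring,
      show ((m:ℝ)+(α+2)+1) = (m:ℝ)+α+3 by ring]
    rw [g3, g2, gΓ1, gΓ2, gΓ2']
    rw [Nat.factorial_succ]
    push_cast
    rw [show 2*(m+1) = 2*m+1+1 by ring, pow_succ, pow_succ]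
    have hfac : ((m.factorial : ℝ)) ≠ 0 := Nat.cast_ne_zero.mpr m.factorial_ne_zero
    have hma1 : ((m:ℝ)+α+1) ≠ 0 := ne_of_gt (by linarith)
    have hma2 : ((m:ℝ)+α+2) ≠ 0 := ne_of_gt (by linarith)
    field_simp
    ring
  rw [tsum_congr hterm, tsum_mul_left]

lemma continuous_besselJ {α : ℝ} (hα : -1 < α) : Continuous (besselJ α) :=
  continuous_iff_continuousAt.mpr fun x => (hasDerivAt_besselJ hα x).continuousAt

/-- derivative of besselJ -/
noncomputable def bD (α : ℝ) (z : ℝ) : ℝ := -(z/(2*(α+1))) * besselJ (α+1) z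

lemma hasDerivAt_bD {α : ℝ} (hα : -1 < α) (z : ℝ) :
    HasDerivAt (bD α)
      (-(1/(2*(α+1))) * besselJ (α+1) z + z^2/(4*(α+1)*(α+2)) * besselJ (α+2) z) z := by
  have h1 : HasDerivAt (fun z : ℝ => -(z/(2*(α+1)))) (-(1/(2*(α+1)))) z := by
    exact ((hasDerivAt_id z).div_const (2*(α+1))).neg
  have h2 := hasDerivAt_besselJ (by linarith : (-1:ℝ) < α+1) z
  rw [show α+1+1 = α+2 by ring] at h2
  have := h1.mul h2
  refine HasDerivAt.congr_deriv this ?_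
  have hd1 : (α:ℝ) + 1 ≠ 0 := by linarith
  have hd2 : (α:ℝ) + 2 ≠ 0 := by linarith
  field_simp
  ring

lemma lommel {α : ℝ} (hα : -1/2 < α) (s x : ℝ) :
    ∫ t in (0:ℝ)..1, (x^2 - s^2) * (t ^ (2*α+1) * (besselJ α (s*t) * besselJ α (x*t))) =
      s * bD α s * besselJ α x - besselJ α s * (x * bD α x) := by
  have hα1 : (-1:ℝ) < α := by linarith
  have hα1' : (-1:ℝ) < α + 1 := by linarith
  have hexp : (0:ℝ) < 2*α+1 := by linarith
  set W : ℝ → ℝ := fun t => t ^ (2*α+1) *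
    (s * bD α (s*t) * besselJ α (x*t) - besselJ α (s*t) * (x * bD α (x*t))) with hW
  have hcont_rpow : Continuous (fun t : ℝ => t ^ (2*α+1)) :=
    continuous_iff_continuousAt.mpr fun t =>
      Real.continuousAt_rpow_const t _ (Or.inr (by linarith))
  have hcont_bD : ∀ β : ℝ, (-1:ℝ) < β → Continuous (bD β) := by
    intro β hβ
    exact ((continuous_id.div_const _).neg).mul
      (continuous_besselJ (by linarith : (-1:ℝ) < β+1))
  have hcontW : Continuous W := by
    apply hcont_rpow.mul
    apply Continuous.sub
    · exact ((continuous_const.mul ((hcont_bD α hα1).comp (continuous_const.mul continuous_id))).mul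
        ((continuous_besselJ hα1).comp (continuous_const.mul continuous_id)))
    · exact ((continuous_besselJ hα1).comp (continuous_const.mul continuous_id)).mul
        (continuous_const.mul ((hcont_bD α hα1).comp (continuous_const.mul continuous_id)))
  have hderivW : ∀ t ∈ Set.Ioo (0:ℝ) 1, HasDerivAt W
      ((x^2 - s^2) * (t ^ (2*α+1) * (besselJ α (s*t) * besselJ α (x*t)))) t := by
    intro t ht
    have ht0 : (0:ℝ) < t := ht.1
    have hrpow : HasDerivAt (fun t : ℝ => t ^ (2*α+1)) ((2*α+1) * t ^ (2*α+1-1)) t :=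
      Real.hasDerivAt_rpow_const (Or.inl ht0.ne')
    have hst : HasDerivAt (fun t : ℝ => s*t) s t := by
      simpa using (hasDerivAt_id t).const_mul s
    have hxt : HasDerivAt (fun t : ℝ => x*t) x t := by
      simpa using (hasDerivAt_id t).const_mul x
    have hDs := (hasDerivAt_bD hα1 (s*t)).comp t hst
    have hDx := (hasDerivAt_bD hα1 (x*t)).comp t hxt
    have hJs := (hasDerivAt_besselJ hα1 (s*t)).comp t hst
    have hJx := (hasDerivAt_besselJ hα1 (x*t)).comp t hxt
    have hG := (((hDs.const_mul s).mul hJx).sub (hJs.mul (hDx.const_mul x)))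
    have hWt := hrpow.mul hG
    refine HasDerivAt.congr_deriv hWt ?_
    rw [show (2*α+1-1 : ℝ) = 2*α by ring,
      Real.rpow_add_one ht0.ne']
    have h1 := bessel_rec hα1 (s*t)
    have h2 := bessel_rec hα1 (x*t)
    have h1' : (s*t)^2/(4*(α+1)*(α+2)) * besselJ (α+2) (s*t)
        = besselJ (α+1) (s*t) - besselJ α (s*t) := by linarith
    have h2' : (x*t)^2/(4*(α+1)*(α+2)) * besselJ (α+2) (x*t)
        = besselJ (α+1) (x*t) - besselJ α (x*t) := by linarith
    simp only [Function.comp_apply, bD, Pi.mul_apply, Pi.sub_apply]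
    rw [h1', h2']
    have hd1 : (α:ℝ) + 1 ≠ 0 := by linarith
    field_simp
    ring
  have hJc : ∀ c : ℝ, Continuous (fun t : ℝ => besselJ α (c*t)) := fun c =>
    (continuous_besselJ hα1).comp (continuous_const.mul continuous_id)
  have hint : IntervalIntegrable
      (fun t : ℝ => (x^2 - s^2) * (t ^ (2*α+1) * (besselJ α (s*t) * besselJ α (x*t))))
      volume 0 1 := by
    exact (continuous_const.mul (hcont_rpow.mul ((hJc s).mul (hJc x)))).intervalIntegrable 0 1
  rw [intervalIntegral.integral_eq_sub_of_hasDerivAt_of_le (by norm_num) hcontW.continuousOn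
    hderivW hint]
  have hW1 : W 1 = s * bD α s * besselJ α x - besselJ α s * (x * bD α x) := by
    simp only [hW, mul_one]
    rw [Real.one_rpow]
    ring
  have hW0 : W 0 = 0 := by
    simp only [hW, mul_zero]
    rw [Real.zero_rpow (by positivity : (2*α+1 : ℝ) ≠ 0)]
    ring
  rw [hW1, hW0, sub_zero]

lemma const_id {α : ℝ} (hα : -1 < α) :
    (4*π)^(α+1) * Gamma (α+2) * (2*π^(α+1)/Gamma (α+1)) * ((2*π)⁻¹ * ((2*π)^(2*α+1))⁻¹)
      = 2*(α+1) := by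
  have hπ : (0:ℝ) < π := pi_pos
  have h2π : (0:ℝ) < 2*π := by linarith
  have hΓ : (0:ℝ) < Gamma (α+1) := Real.Gamma_pos_of_pos (by linarith)
  have hg1 : Gamma (α+2) = (α+1) * Gamma (α+1) := by
    rw [show α+2 = (α+1)+1 by ring]; exact Real.Gamma_add_one (by linarith)
  have e0 : (4*π : ℝ) = (2*π)^(2:ℕ) / π := by field_simp; ring
  have e1 : (4*π : ℝ)^(α+1) = (2*π)^(2*(α+1)) / π^(α+1) := by
    rw [e0, Real.div_rpow (by positivity) hπ.le, ← Real.rpow_natCast (2*π) 2,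
      ← Real.rpow_mul h2π.le]
    norm_num
  have e2 : (2*π)^(2*(α+1)) = (2*π)^(2*α+1) * (2*π) := by
    rw [show (2*(α+1) : ℝ) = (2*α+1) + 1 by ring, Real.rpow_add h2π, Real.rpow_one]
  have hp1 : (0:ℝ) < π^(α+1) := Real.rpow_pos_of_pos hπ _
  have hp2 : (0:ℝ) < (2*π)^(2*α+1) := Real.rpow_pos_of_pos h2π _
  rw [e1, e2, hg1]
  field_simp

open scoped ENNReal NNReal

lemma const_id' {α : ℝ} (hα : -1 < α) :
    (4*π)^(α+1) * Gamma (α+2) * (2*π^(α+1)/Gamma (α+1))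
      = 2*(α+1) * ((2*π) * (2*π)^(2*α+1)) := by
  have hπ : (0:ℝ) < π := pi_pos
  have h2π : (0:ℝ) < 2*π := by linarith
  have hp2 : (0:ℝ) < (2*π)^(2*α+1) := Real.rpow_pos_of_pos h2π _
  have hΓ : (0:ℝ) < Gamma (α+1) := Real.Gamma_pos_of_pos (by linarith)
  have hC := const_id hα
  field_simp at hC
  field_simp
  linear_combination hC

/-- The Fourier-Bessel transform of `ϑ_α j_α(2πs·)χ_{[0,1/2π]}`, for `s` a zero
of `j_{α+1}`, is `x ↦ j_α(s) x² j_{α+1}(x)/(x² − s²)`. -/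
theorem fourierBessel_of_truncated_bessel
    {α : ℝ} (hα : -1/2 < α) {s : ℝ} (hs : 0 < s) (hzero : besselJ (α+1) s = 0)
    {x : ℝ} (hx : 0 ≤ x) (hxs : x ≠ s) :
    ((4*π) ^ (α+1) * Gamma (α+2)) *
        ∫ y in Set.Icc 0 (1/(2*π)), besselJ α (2*π*s*y) * besselJ α (2*π*x*y) ∂(muB α) =
      besselJ α s * (x^2 * besselJ (α+1) x / (x^2 - s^2)) := by
  have hα1 : (-1:ℝ) < α := by linarith
  have hπ : (0:ℝ) < π := pi_pos
  have h2π : (0:ℝ) < 2*π := by linarith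
  have hb : (0:ℝ) ≤ 1/(2*π) := by positivity
  have hΓ : (0:ℝ) < Gamma (α+1) := Real.Gamma_pos_of_pos (by linarith)
  have hα1ne : (α:ℝ)+1 ≠ 0 := by linarith
  set k : ℝ := 2*π^(α+1)/Gamma (α+1) with hk
  have hk0 : 0 ≤ k := by positivity
  have hxs2 : x^2 - s^2 ≠ 0 := by
    intro h
    have h2 : (x - s) * (x + s) = 0 := by linear_combination h
    rcases mul_eq_zero.mp h2 with h3 | h3
    · exact hxs (by linarith)
    · linarith
  have hrpow_cont : Continuous (fun t : ℝ => t ^ (2*α+1)) :=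
    continuous_iff_continuousAt.mpr fun t =>
      Real.continuousAt_rpow_const t _ (Or.inr (by linarith))
  have hmeas : Measurable (fun y : ℝ => (k * y ^ (2*α+1)).toNNReal) :=
    ((hrpow_cont.measurable).const_mul k).real_toNNReal
  -- Step A : unfold the measure
  have stepA : (∫ y in Set.Icc 0 (1/(2*π)),
        besselJ α (2*π*s*y) * besselJ α (2*π*x*y) ∂(muB α))
      = ∫ y in Set.Icc 0 (1/(2*π)),
        (k * y ^ (2*α+1)) * (besselJ α (2*π*s*y) * besselJ α (2*π*x*y)) := by
    rw [muB]
    rw [show (fun x : ℝ => ENNReal.ofReal (2 * π ^ (α+1) / Gamma (α+1) * x ^ (2*α+1)))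
        = (fun y : ℝ => ((k * y ^ (2*α+1)).toNNReal : ℝ≥0∞)) from by
      funext y; rw [ENNReal.ofReal, hk]]
    rw [MeasureTheory.restrict_withDensity measurableSet_Icc,
      integral_withDensity_eq_integral_smul hmeas,
      Measure.restrict_restrict measurableSet_Icc,
      Set.inter_eq_self_of_subset_left Set.Icc_subset_Ici_self]
    apply MeasureTheory.setIntegral_congr_fun measurableSet_Icc
    intro y hy
    have hy0 : 0 ≤ y := hy.1
    have : (0:ℝ) ≤ k * y ^ (2*α+1) := mul_nonneg hk0 (Real.rpow_nonneg hy0 _)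
    simp [NNReal.smul_def, Real.coe_toNNReal _ this]
  -- Step B : Icc set integral to interval integral
  have stepB : (∫ y in Set.Icc 0 (1/(2*π)),
        (k * y ^ (2*α+1)) * (besselJ α (2*π*s*y) * besselJ α (2*π*x*y)))
      = ∫ y in (0:ℝ)..(1/(2*π)),
        (k * y ^ (2*α+1)) * (besselJ α (2*π*s*y) * besselJ α (2*π*x*y)) := by
    rw [MeasureTheory.integral_Icc_eq_integral_Ioc, ← intervalIntegral.integral_of_le hb]
  -- Step C : substitution t = 2π y
  set G : ℝ → ℝ := fun t => k * (t/(2*π)) ^ (2*α+1) * (besselJ α (s*t) * besselJ α (x*t))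
    with hG
  have stepC : (∫ y in (0:ℝ)..(1/(2*π)),
        (k * y ^ (2*α+1)) * (besselJ α (2*π*s*y) * besselJ α (2*π*x*y)))
      = (2*π)⁻¹ * ∫ t in (0:ℝ)..1, G t := by
    have hGeq : ∀ y : ℝ, (k * y ^ (2*α+1)) * (besselJ α (2*π*s*y) * besselJ α (2*π*x*y))
        = G (2*π*y) := by
      intro y
      rw [hG]
      simp only []
      rw [mul_div_cancel_left₀ y (ne_of_gt h2π),
        show s*(2*π*y) = 2*π*s*y by ring, show x*(2*π*y) = 2*π*x*y by ring]
    rw [intervalIntegral.integral_congr (g := fun y => G (2*π*y)) (fun y _ => hGeq y),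
      intervalIntegral.integral_comp_mul_left G (ne_of_gt h2π), mul_zero,
      show 2*π*(1/(2*π)) = 1 by field_simp, smul_eq_mul]
  -- Step D : pull out the constant
  have stepD : (∫ t in (0:ℝ)..1, G t)
      = (k * ((2*π)^(2*α+1))⁻¹) *
          ∫ t in (0:ℝ)..1, t ^ (2*α+1) * (besselJ α (s*t) * besselJ α (x*t)) := by
    rw [← intervalIntegral.integral_const_mul]
    apply intervalIntegral.integral_congr
    intro t ht
    rw [Set.uIcc_of_le (by norm_num : (0:ℝ) ≤ 1)] at ht
    have ht0 : 0 ≤ t := ht.1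
    rw [hG]
    simp only []
    rw [Real.div_rpow ht0 h2π.le]
    field_simp
  -- Step E : Lommel integral
  have hI : (∫ t in (0:ℝ)..1, t ^ (2*α+1) * (besselJ α (s*t) * besselJ α (x*t)))
      = besselJ α s * (x^2 * besselJ (α+1) x) / ((x^2-s^2) * (2*(α+1))) := by
    have hlom := lommel hα s x
    rw [intervalIntegral.integral_const_mul] at hlom
    have hbDs : bD α s = 0 := by simp only [bD, hzero]; ring
    rw [hbDs] at hlom
    simp only [bD] at hlom
    field_simp at hlom
    simp only [mul_assoc] at hlom
    rw [eq_div_iff (mul_ne_zero hxs2 (by linarith : (2*(α+1) : ℝ) ≠ 0))]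
    linear_combination hlom
  rw [stepA, stepB, stepC, stepD, hI]
  have hC := const_id' hα1
  have hp2 : (0:ℝ) < (2*π)^(2*α+1) := Real.rpow_pos_of_pos h2π _
  have hC2 : (4*π)^(α+1) * Gamma (α+2) * (2*π^(α+1))
      = 2*(α+1) * (2*π*(2*π)^(2*α+1)) * Gamma (α+1) := by
    rw [mul_div_assoc', div_eq_iff hΓ.ne'] at hC
    linear_combination hC
  rw [hk] at *
  field_simp
  rw [show (π*2)^(α*2+1) = (2*π)^(2*α+1) by ring_nf]
  linear_combination (besselJ α s * x^2 * besselJ (α+1) x / 2) * hC2
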